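/- Every univariate real polynomial that is nonnegative on all of ℝ is a sum of two squares of polynomials. -/

import Mathlib

open Polynomial Filter

private lemma sum_two_squares_aux : ∀ n : ℕ, ∀ p : Polynomial ℝ, p.natDegree ≤ n →
    (∀ x : ℝ, 0 ≤ p.eval x) → ∃ a b : Polynomial ℝ, p = a ^ 2 + b ^ 2 := by
  intro n
  induction n using Nat.strong_induction_on with
  | _ n IH =>
  intro p hdeg hp
  rcases eq_or_ne p 0 with rfl | hp0
  · exact ⟨0, 0, by simp⟩
  rcases Nat.eq_zero_or_pos p.natDegree with h0 | h1
  · -- constant polynomial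
    have hc : 0 ≤ p.coeff 0 := by
      have := hp 0
      rwa [eq_C_of_natDegree_eq_zero h0, eval_C] at this
    refine ⟨Polynomial.C (Real.sqrt (p.coeff 0)), 0, ?_⟩
    conv_lhs => rw [eq_C_of_natDegree_eq_zero h0]
    rw [← map_pow, Real.sq_sqrt hc]
    ring
  · -- p has a complex root
    obtain ⟨z, hz⟩ : ∃ z : ℂ, (Polynomial.aeval z) p = 0 :=
      IsAlgClosed.exists_aeval_eq_zero _ p (natDegree_pos_iff_degree_pos.mp h1).ne'
    rcases eq_or_ne z.im 0 with hzim | hzim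
    · -- real root r
      lift z to ℝ using hzim with r
      have hroot : p.IsRoot r := by
        erw [aeval_ofReal, RCLike.ofReal_eq_zero] at hz
        exact hz
      -- derivative vanishes at r
      have hmin : IsLocalMin (fun x => p.eval x) r :=
        Filter.Eventually.of_forall fun x => by
          simpa [hroot.eq_zero] using hp x
      have hder : p.derivative.eval r = 0 := by
        have := hmin.deriv_eq_zero
        rwa [Polynomial.deriv] at this
      obtain ⟨q0, hq0⟩ := dvd_iff_isRoot.mpr hroot
      have hq0root : q0.IsRoot r := by
        have hdq : p.derivative = q0 + (X - C r) * q0.derivative := by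
          rw [hq0, derivative_mul, derivative_X_sub_C, one_mul]
        have := hder
        rw [hdq] at this
        simpa using this
      obtain ⟨q, hq⟩ := dvd_iff_isRoot.mpr hq0root
      have hpfact : p = (X - C r) ^ 2 * q := by rw [hq0, hq]; ring
      have hqne : q ≠ 0 := by rintro rfl; simp [hpfact] at hp0
      have hq' : ∀ x : ℝ, x ≠ r → 0 ≤ q.eval x := by
        intro x hx
        have hpos : (0:ℝ) < (x - r) ^ 2 := pow_two_pos_of_ne_zero (sub_ne_zero.mpr hx)
        have h := hp x
        rw [hpfact] at h
        simp only [eval_mul, eval_pow, eval_sub, eval_X, eval_C] at h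
        nlinarith [h, hpos]
      have hqnn : ∀ x : ℝ, 0 ≤ q.eval x := by
        intro x
        rcases eq_or_ne x r with rfl | hx
        · have hten : Tendsto (fun y => q.eval y) (nhdsWithin x {x}ᶜ) (nhds (q.eval x)) :=
            (q.continuous_aeval.tendsto x).mono_left nhdsWithin_le_nhds
          refine ge_of_tendsto hten ?_
          filter_upwards [self_mem_nhdsWithin] with y hy
          exact hq' y hy
        · exact hq' x hx
      have hdegq : q.natDegree + 2 = p.natDegree := by
        rw [hpfact, natDegree_mul (pow_ne_zero 2 (X_sub_C_ne_zero r)) hqne, natDegree_pow, natDegree_X_sub_C]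
        ring
      have hlt : q.natDegree < n := by omega
      obtain ⟨a, b, hab⟩ := IH q.natDegree hlt q le_rfl hqnn
      exact ⟨(X - C r) * a, (X - C r) * b, by rw [hpfact, hab]; ring⟩
    · -- nonreal root
      obtain ⟨q, hq⟩ := p.quadratic_dvd_of_aeval_eq_zero_im_ne_zero hz hzim
      have hnorm : ‖z‖ ^ 2 = z.re ^ 2 + z.im ^ 2 := by
        rw [Complex.sq_norm, Complex.normSq_apply]; ring
      have hdfact : X ^ 2 - C (2 * z.re) * X + C (‖z‖ ^ 2)
          = (X - C z.re) ^ 2 + C z.im ^ 2 := by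
        rw [hnorm, map_add, map_pow, map_pow, map_mul, map_ofNat]
        ring
      have hdeval : ∀ x : ℝ, (X ^ 2 - C (2 * z.re) * X + C (‖z‖ ^ 2)).eval x
          = (x - z.re) ^ 2 + z.im ^ 2 := by
        intro x
        rw [hdfact]
        simp
      have hdpos : ∀ x : ℝ, (0:ℝ) < (x - z.re) ^ 2 + z.im ^ 2 := by
        intro x; positivity
      have hqnn : ∀ x : ℝ, 0 ≤ q.eval x := by
        intro x
        have h := hp x
        rw [hq, eval_mul, hdeval] at h
        nlinarith [h, hdpos x]
      have hqne : q ≠ 0 := by rintro rfl; simp [hq] at hp0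
      have hdne : (X ^ 2 - C (2 * z.re) * X + C (‖z‖ ^ 2) : Polynomial ℝ) ≠ 0 := by
        intro h
        have h2 := hdpos 0
        rw [← hdeval 0, h, eval_zero] at h2
        exact lt_irrefl _ h2
      have hdegd : (X ^ 2 - C (2 * z.re) * X + C (‖z‖ ^ 2) : Polynomial ℝ).natDegree = 2 := by
        compute_degree!
      have hdegq : q.natDegree + 2 = p.natDegree := by
        rw [hq, natDegree_mul hdne hqne, hdegd]
        ring
      have hlt : q.natDegree < n := by omega
      obtain ⟨a, b, hab⟩ := IH q.natDegree hlt q le_rfl hqnn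
      refine ⟨(X - C z.re) * a - C z.im * b, (X - C z.re) * b + C z.im * a, ?_⟩
      rw [hq, hdfact, hab]
      ring

/-- Every univariate real polynomial nonnegative on ℝ is a sum of two squares. -/
theorem nonneg_polynomial_sum_two_squares (p : Polynomial ℝ)
    (hp : ∀ x : ℝ, 0 ≤ p.eval x) :
    ∃ a b : Polynomial ℝ, p = a ^ 2 + b ^ 2 := by
  exact sum_two_squares_aux p.natDegree p le_rfl hp
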